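/- Fix positive integers P and M and strictly positive weights η_i(j) > 0 for i ∈ {1,…,P}, j ∈ {−1,0,…,M}. Consider the Gibbs sampler on the finite state space Γ of positive 1-1 vectors with transition kernel π(γ'|γ) = ∏_{n=1}^P π_n(γ'_n | γ'_{1:n−1}, γ_{n+1:P}), whose nth conditional is proportional to η_n(j) ∏_{i∈n̄} (1 − 1_{{1,…,M}}(j) δ_j[γ_i]). Then, starting from any initial state in Γ, the chain converges to the target distribution π(γ) ∝ 1_Γ(γ) ∏_{i=1}^P η_i(γ_i) at an exponential rate: letting π^j denote the jth power of the transition matrix and β := min_{γ,γ'∈Γ} π²(γ'|γ) > 0, for all j ≥ 0, max_{γ,γ'∈Γ} |π^j(γ'|γ) − π(γ')| ≤ (1 − 2β)^{⌊j/2⌋}. -/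

import Mathlib

open Finset

/-- `1_{{1,…,M}}(j)`: the indicator (as a real number) that `1 ≤ j ≤ M`. -/
def ind1M (M : ℕ) (j : ℤ) : ℝ := if 1 ≤ j ∧ j ≤ (M : ℤ) then 1 else 0

/-- `δ_a[b]`: the Kronecker delta (as a real number). -/
def kdelta (a b : ℤ) : ℝ := if a = b then 1 else 0

/-- `γ` is positive 1-1: no distinct indices `i, i'` with `γ i = γ i' > 0`. -/
def PosOneOne {P : ℕ} (γ : Fin P → ℤ) : Prop :=
  ∀ i i' : Fin P, i ≠ i' → ¬(γ i = γ i' ∧ 0 < γ i)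

/-- Unnormalized weight of the `n`th Gibbs conditional given the other
coordinates `c`: `η_n(j) ∏_{i∈n̄} (1 − 1_{{1,…,M}}(j) δ_j[c_i])`. -/
def wcond {P : ℕ} (M : ℕ) (η : Fin P → ℤ → ℝ) (c : Fin P → ℤ) (n : Fin P) (j : ℤ) : ℝ :=
  η n j * ∏ i ∈ ({n}ᶜ : Finset (Fin P)), (1 - ind1M M j * kdelta j (c i))

/-- Normalizing constant `K_n` of the `n`th Gibbs conditional. -/
noncomputable def Knorm {P : ℕ} (M : ℕ) (η : Fin P → ℤ → ℝ) (c : Fin P → ℤ) (n : Fin P) : ℝ :=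
  ∑ j ∈ Finset.Icc (-1 : ℤ) (M : ℤ), wcond M η c n j

/-- The mixed conditioning vector for the `n`th sub-iteration of the Gibbs
sampler: coordinates `i < n` come from the already-updated state `γ'`, the
remaining ones from the old state `γ`. -/
def mix {P : ℕ} (γ' γ : Fin P → ℤ) (n : Fin P) : Fin P → ℤ :=
  fun i => if i < n then γ' i else γ i

/-- The Gibbs transition kernel
`π(γ'|γ) = ∏_{n=1}^P π_n(γ'_n | γ'_{1:n−1}, γ_{n+1:P})`. -/
noncomputable def gibbs {P : ℕ} (M : ℕ) (η : Fin P → ℤ → ℝ) (γ' γ : Fin P → ℤ) : ℝ :=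
  ∏ n : Fin P, wcond M η (mix γ' γ n) n (γ' n) / Knorm M η (mix γ' γ n) n


/-- The finite state space `Γ` of positive 1-1 vectors in `{−1,…,M}^P`. -/
noncomputable def GammaF (P M : ℕ) : Finset (Fin P → ℤ) :=
  (Fintype.piFinset fun _ : Fin P => Finset.Icc (-1 : ℤ) (M : ℤ)).filter
    (fun γ => ∀ i i' : Fin P, i ≠ i' → ¬(γ i = γ i' ∧ 0 < γ i))

/-- `π^j`, the `j`th power of the Gibbs transition matrix on the state space `Γ`. -/
noncomputable def kernelPow (P M : ℕ) (η : Fin P → ℤ → ℝ) :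
    ℕ → (Fin P → ℤ) → (Fin P → ℤ) → ℝ
  | 0, γ', γ => if γ' = γ then 1 else 0
  | j + 1, γ', γ => ∑ ζ ∈ GammaF P M, gibbs M η γ' ζ * kernelPow P M η j ζ γ

/-- The two-step transition probability `π²(γ'|γ)` of the Gibbs sampler on `Γ`. -/
noncomputable def twoStep (P M : ℕ) (η : Fin P → ℤ → ℝ) (γ' γ : Fin P → ℤ) : ℝ :=
  ∑ ζ ∈ GammaF P M, gibbs M η γ' ζ * gibbs M η ζ γ

/-- The target distribution `π(γ) ∝ 1_Γ(γ) ∏_{i=1}^P η_i(γ_i)`. -/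
noncomputable def targetDist (P M : ℕ) (η : Fin P → ℤ → ℝ) (γ : Fin P → ℤ) : ℝ :=
  (if γ ∈ GammaF P M then ∏ i, η i (γ i) else 0) /
    ∑ ζ ∈ GammaF P M, ∏ i, η i (ζ i)

-- auxiliary definitions
noncomputable def HF (P M : ℕ) : Finset (Fin P → ℤ) :=
  Fintype.piFinset fun _ : Fin P => Finset.Icc (-1 : ℤ) (M : ℤ)

noncomputable def qc {P : ℕ} (M : ℕ) (η : Fin P → ℤ → ℝ) (c : Fin P → ℤ) (n : Fin P) (j : ℤ) : ℝ :=
  wcond M η c n j / Knorm M η c n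

section Basic
variable {P M : ℕ} {η : Fin P → ℤ → ℝ}

lemma neg_one_mem_Icc : (-1 : ℤ) ∈ Finset.Icc (-1 : ℤ) (M : ℤ) := by
  simp only [Finset.mem_Icc, le_refl, true_and]
  omega

lemma factor_cases (M : ℕ) (j x : ℤ) :
    (1 - ind1M M j * kdelta j x) = 0 ∨ (1 - ind1M M j * kdelta j x) = 1 := by
  unfold ind1M kdelta; split_ifs <;> norm_num

lemma factor_nonneg (M : ℕ) (j x : ℤ) : 0 ≤ 1 - ind1M M j * kdelta j x := by
  rcases factor_cases M j x with h | h <;> rw [h] <;> norm_num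

lemma factor_eq_one (M : ℕ) {j x : ℤ} (h : ¬(j = x ∧ 1 ≤ j ∧ j ≤ (M:ℤ))) :
    (1 - ind1M M j * kdelta j x) = 1 := by
  unfold ind1M kdelta
  split_ifs with h1 h2
  · exact absurd ⟨h2, h2 ▸ h1⟩ h
  all_goals ring

lemma factor_eq_zero (M : ℕ) {j x : ℤ} (h : j = x ∧ 1 ≤ j ∧ j ≤ (M:ℤ)) :
    (1 - ind1M M j * kdelta j x) = 0 := by
  unfold ind1M kdelta
  rw [if_pos h.2, if_pos h.1]; ring

lemma prod_factor_nonneg (c : Fin P → ℤ) (n : Fin P) (j : ℤ) :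
    0 ≤ ∏ i ∈ ({n}ᶜ : Finset (Fin P)), (1 - ind1M M j * kdelta j (c i)) :=
  Finset.prod_nonneg fun i _ => factor_nonneg M j (c i)

variable (hη : ∀ i : Fin P, ∀ j ∈ Finset.Icc (-1 : ℤ) (M : ℤ), 0 < η i j)
include hη

lemma wcond_nonneg (c : Fin P → ℤ) (n : Fin P) {j : ℤ}
    (hj : j ∈ Finset.Icc (-1 : ℤ) (M : ℤ)) : 0 ≤ wcond M η c n j :=
  mul_nonneg (hη n j hj).le (prod_factor_nonneg c n j)

omit hη in
lemma wcond_neg_one (c : Fin P → ℤ) (n : Fin P) : wcond M η c n (-1) = η n (-1) := by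
  unfold wcond
  rw [Finset.prod_eq_one, mul_one]
  intro i _
  apply factor_eq_one
  rintro ⟨-, h1, -⟩; omega

lemma Knorm_pos (c : Fin P → ℤ) (n : Fin P) : 0 < Knorm M η c n := by
  have h1 : 0 < wcond M η c n (-1) := by
    rw [wcond_neg_one c n]; exact hη n (-1) neg_one_mem_Icc
  calc 0 < wcond M η c n (-1) := h1
    _ ≤ Knorm M η c n :=
      Finset.single_le_sum (fun j hj => wcond_nonneg hη c n hj) neg_one_mem_Icc

lemma qc_nonneg (c : Fin P → ℤ) (n : Fin P) {j : ℤ}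
    (hj : j ∈ Finset.Icc (-1 : ℤ) (M : ℤ)) : 0 ≤ qc M η c n j :=
  div_nonneg (wcond_nonneg hη c n hj) (Knorm_pos hη c n).le

lemma qc_sum (c : Fin P → ℤ) (n : Fin P) :
    ∑ j ∈ Finset.Icc (-1 : ℤ) (M : ℤ), qc M η c n j = 1 := by
  unfold qc
  rw [← Finset.sum_div]
  exact div_self (Knorm_pos hη c n).ne'

omit hη

lemma wcond_congr {c c' : Fin P → ℤ} {n : Fin P} (h : ∀ i, i ≠ n → c i = c' i) (j : ℤ) :
    wcond M η c n j = wcond M η c' n j := by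
  unfold wcond
  congr 1
  apply Finset.prod_congr rfl
  intro i hi
  rw [h i (by simpa using hi)]

lemma qc_congr {c c' : Fin P → ℤ} {n : Fin P} (h : ∀ i, i ≠ n → c i = c' i) (j : ℤ) :
    qc M η c n j = qc M η c' n j := by
  unfold qc Knorm
  rw [wcond_congr h]
  congr 1
  exact Finset.sum_congr rfl fun x _ => wcond_congr h x

lemma mem_HF {w : Fin P → ℤ} : w ∈ HF P M ↔ ∀ i, w i ∈ Finset.Icc (-1 : ℤ) (M : ℤ) := by
  simp [HF, Fintype.mem_piFinset]

lemma sum_agree {b : Fin P → ℤ} (hb : b ∈ HF P M) (n : Fin P) (F : (Fin P → ℤ) → ℝ) :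
    ∑ w ∈ HF P M, (if ∀ i, i ≠ n → b i = w i then F w else 0)
      = ∑ j ∈ Finset.Icc (-1 : ℤ) (M : ℤ), F (Function.update b n j) := by
  rw [← Finset.sum_filter]
  have himg : (HF P M).filter (fun w => ∀ i, i ≠ n → b i = w i)
      = (Finset.Icc (-1 : ℤ) (M : ℤ)).image (fun j => Function.update b n j) := by
    ext w
    simp only [Finset.mem_filter, Finset.mem_image]
    constructor
    · rintro ⟨hw, hcond⟩
      refine ⟨w n, mem_HF.1 hw n, ?_⟩
      funext i
      by_cases hi : i = n
      · subst hi; simp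
      · rw [Function.update_of_ne hi]
        exact hcond i hi
    · rintro ⟨j, hj, rfl⟩
      constructor
      · rw [mem_HF]
        intro i
        by_cases hi : i = n
        · subst hi; simpa using hj
        · rw [Function.update_of_ne hi]; exact mem_HF.1 hb i
      · intro i hi; rw [Function.update_of_ne hi]
  rw [himg, Finset.sum_image]
  intro j _ j' _ h
  have := congrFun h n
  simpa using this

end Basic

/-- Partial Gibbs kernel: the first `k` coordinates have been resampled. -/
noncomputable def Gk {P : ℕ} (M : ℕ) (η : Fin P → ℤ → ℝ) (k : ℕ) (γ' γ : Fin P → ℤ) : ℝ :=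
  if ∀ i : Fin P, k ≤ (i : ℕ) → γ' i = γ i then
    ∏ n ∈ univ.filter (fun n : Fin P => (n : ℕ) < k), qc M η (mix γ' γ n) n (γ' n)
  else 0

/-- Single-site update kernel at coordinate `n`. -/
noncomputable def Kk {P : ℕ} (M : ℕ) (η : Fin P → ℤ → ℝ) (n : Fin P) (γ' ζ : Fin P → ℤ) : ℝ :=
  if ∀ i, i ≠ n → γ' i = ζ i then qc M η ζ n (γ' n) else 0

section GK
variable {P M : ℕ} {η : Fin P → ℤ → ℝ}

lemma Gk_zero (γ' γ : Fin P → ℤ) : Gk M η 0 γ' γ = if γ' = γ then 1 else 0 := by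
  unfold Gk
  have h1 : (univ.filter (fun n : Fin P => (n : ℕ) < 0)) = ∅ := by
    apply Finset.filter_false_of_mem; intro x _; omega
  rw [h1, Finset.prod_empty]
  have h2 : (∀ i : Fin P, 0 ≤ (i : ℕ) → γ' i = γ i) ↔ γ' = γ := by
    simp [funext_iff]
  simp only [h2]

lemma Gk_top (k : ℕ) (hk : P ≤ k) (γ' γ : Fin P → ℤ) : Gk M η k γ' γ = gibbs M η γ' γ := by
  unfold Gk gibbs
  rw [if_pos (fun i hi => absurd (lt_of_lt_of_le i.isLt hk) (by omega))]
  have h1 : (univ.filter (fun n : Fin P => (n : ℕ) < k)) = univ := by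
    apply Finset.filter_true_of_mem; intro x _; exact lt_of_lt_of_le x.isLt hk
  rw [h1]
  rfl

lemma Gk_succ (k : ℕ) (hk : k < P) {γ' γ : Fin P → ℤ}
    (hγ' : γ' ∈ HF P M) (hγ : γ ∈ HF P M) :
    Gk M η (k + 1) γ' γ = ∑ ζ ∈ HF P M, Kk M η ⟨k, hk⟩ γ' ζ * Gk M η k ζ γ := by
  set n : Fin P := ⟨k, hk⟩ with hn
  have hsum := sum_agree (M := M) hγ' n (fun w => qc M η w n (γ' n) * Gk M η k w γ)
  rw [show (∑ ζ ∈ HF P M, Kk M η n γ' ζ * Gk M η k ζ γ)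
      = ∑ w ∈ HF P M, (if ∀ i, i ≠ n → γ' i = w i
          then (fun w => qc M η w n (γ' n) * Gk M η k w γ) w else 0) from
    Finset.sum_congr rfl fun w _ => by unfold Kk; split_ifs <;> simp, hsum]
  -- now compute each term of the RHS sum
  have hterm : ∀ j ∈ Finset.Icc (-1 : ℤ) (M : ℤ),
      qc M η (Function.update γ' n j) n (γ' n) * Gk M η k (Function.update γ' n j) γ
      = qc M η γ' n (γ' n) *
        (if (j = γ n ∧ ∀ i : Fin P, k + 1 ≤ (i : ℕ) → γ' i = γ i) then
          ∏ m ∈ univ.filter (fun m : Fin P => (m : ℕ) < k), qc M η (mix γ' γ m) m (γ' m)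
        else 0) := by
    intro j _
    have hq : qc M η (Function.update γ' n j) n (γ' n) = qc M η γ' n (γ' n) :=
      qc_congr (fun i hi => Function.update_of_ne hi j γ') (γ' n)
    rw [hq]
    congr 1
    unfold Gk
    have hcond : (∀ i : Fin P, k ≤ (i : ℕ) → Function.update γ' n j i = γ i)
        ↔ (j = γ n ∧ ∀ i : Fin P, k + 1 ≤ (i : ℕ) → γ' i = γ i) := by
      constructor
      · intro h
        refine ⟨by simpa using h n (le_refl k), fun i hi => ?_⟩
        have hne : i ≠ n := by
          intro he; subst he; simp [hn] at hi
        rw [← h i (by omega), Function.update_of_ne hne]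
      · rintro ⟨h1, h2⟩ i hi
        by_cases hne : i = n
        · subst hne; simpa using h1
        · have : (n : ℕ) ≠ (i : ℕ) := fun he => hne (Fin.ext he.symm)
          rw [Function.update_of_ne hne]
          exact h2 i (by simp only [hn] at this ⊢; omega)
    simp only [hcond]
    congr 1
    apply Finset.prod_congr rfl
    intro m hm
    have hmk : (m : ℕ) < k := by simpa using hm
    have hmn : m ≠ n := by intro he; subst he; simp [hn] at hmk
    have hmix : mix (Function.update γ' n j) γ m = mix γ' γ m := by
      funext i
      unfold mix
      split_ifs with hil
      · apply Function.update_of_ne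
        intro he
        have h2 : (i : ℕ) < (m : ℕ) := hil
        rw [he] at h2
        simp only [hn] at h2
        omega
      · rfl
    rw [hmix, Function.update_of_ne hmn]
  rw [Finset.sum_congr rfl hterm]
  -- sum over j collapses at j = γ n
  rw [← Finset.mul_sum]
  have hγn : γ n ∈ Finset.Icc (-1 : ℤ) (M : ℤ) := mem_HF.1 hγ n
  have hcollapse : ∑ j ∈ Finset.Icc (-1 : ℤ) (M : ℤ),
      (if (j = γ n ∧ ∀ i : Fin P, k + 1 ≤ (i : ℕ) → γ' i = γ i) then
        ∏ m ∈ univ.filter (fun m : Fin P => (m : ℕ) < k), qc M η (mix γ' γ m) m (γ' m)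
      else 0)
      = (if (∀ i : Fin P, k + 1 ≤ (i : ℕ) → γ' i = γ i) then
        ∏ m ∈ univ.filter (fun m : Fin P => (m : ℕ) < k), qc M η (mix γ' γ m) m (γ' m)
      else 0) := by
    rw [Finset.sum_eq_single (γ n)]
    · simp
    · intro j _ hj
      rw [if_neg (fun hc => hj hc.1)]
    · intro habs; exact absurd hγn habs
  rw [hcollapse]
  -- now identify with Gk (k+1)
  unfold Gk
  split_ifs with hD
  · -- condition holds
    have hsplit : (univ.filter (fun m : Fin P => (m : ℕ) < k + 1))
        = insert n (univ.filter (fun m : Fin P => (m : ℕ) < k)) := by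
      ext m
      simp only [Finset.mem_filter, Finset.mem_insert, Finset.mem_univ, true_and]
      constructor
      · intro h
        by_cases hmn : m = n
        · left; exact hmn
        · right; have : (m : ℕ) ≠ k := fun he => hmn (Fin.ext he); omega
      · rintro (rfl | h)
        · simp [hn]
        · omega
    rw [hsplit, Finset.prod_insert (by simp [hn])]
    have hqn : qc M η (mix γ' γ n) n (γ' n) = qc M η γ' n (γ' n) := by
      apply qc_congr
      intro i hi
      unfold mix
      split_ifs with hil
      · rfl
      · -- i ≥ n, i ≠ n so i > n i.e. i.val ≥ k+1
        have h1 : ¬ (i : ℕ) < k := fun hc => hil (by simp [hn, Fin.lt_def]; omega)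
        have h2 : (i : ℕ) ≠ k := fun he => hi (Fin.ext he)
        exact (hD i (by omega)).symm
      done
    rw [hqn]
  · ring

end GK

open Classical in
/-- Unnormalized target measure on the hypercube. -/
noncomputable def muW {P : ℕ} (M : ℕ) (η : Fin P → ℤ → ℝ) (γ : Fin P → ℤ) : ℝ :=
  if PosOneOne γ ∧ γ ∈ HF P M then ∏ i, η i (γ i) else 0

/-- `γ'` is 1-1 away from coordinate `n`. -/
def OffD {P : ℕ} (γ' : Fin P → ℤ) (n : Fin P) : Prop :=
  ∀ i i', i ≠ i' → i ≠ n → i' ≠ n → ¬(γ' i = γ' i' ∧ 0 < γ' i)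

instance {P : ℕ} (γ' : Fin P → ℤ) (n : Fin P) : Decidable (OffD γ' n) := by
  unfold OffD; infer_instance

instance {P : ℕ} (γ : Fin P → ℤ) : Decidable (PosOneOne γ) := by
  unfold PosOneOne; infer_instance

section Stat
variable {P M : ℕ} {η : Fin P → ℤ → ℝ}

lemma Kk_rowsum (hη : ∀ i : Fin P, ∀ j ∈ Finset.Icc (-1 : ℤ) (M : ℤ), 0 < η i j)
    (n : Fin P) {ζ : Fin P → ℤ} (hζ : ζ ∈ HF P M) :
    ∑ γ' ∈ HF P M, Kk M η n γ' ζ = 1 := by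
  have h1 : ∀ γ' ∈ HF P M, Kk M η n γ' ζ
      = (if ∀ i, i ≠ n → ζ i = γ' i then (fun w => qc M η ζ n (w n)) γ' else 0) := by
    intro γ' _
    unfold Kk
    have : (∀ i, i ≠ n → γ' i = ζ i) ↔ (∀ i, i ≠ n → ζ i = γ' i) := by
      constructor <;> intro h i hi <;> exact (h i hi).symm
    simp only [this]
  rw [Finset.sum_congr rfl h1, sum_agree hζ n]
  have : ∀ j ∈ Finset.Icc (-1 : ℤ) (M : ℤ),
      qc M η ζ n (Function.update ζ n j n) = qc M η ζ n j := by
    intro j _; rw [Function.update_self]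
  rw [Finset.sum_congr rfl this, qc_sum hη]

lemma muW_update (hj : ∀ i : Fin P, ∀ j ∈ Finset.Icc (-1 : ℤ) (M : ℤ), True) -- dummy
    {γ' : Fin P → ℤ} (hγ' : γ' ∈ HF P M) (n : Fin P) {j : ℤ}
    (hjm : j ∈ Finset.Icc (-1 : ℤ) (M : ℤ)) :
    muW M η (Function.update γ' n j)
      = (if OffD γ' n then ∏ i ∈ ({n}ᶜ : Finset (Fin P)), η i (γ' i) else 0)
        * wcond M η γ' n j := by
  have hu : Function.update γ' n j ∈ HF P M := by
    rw [mem_HF]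
    intro i
    by_cases hi : i = n
    · subst hi; simpa using hjm
    · rw [Function.update_of_ne hi]; exact mem_HF.1 hγ' i
  have hprod : ∏ i, η i (Function.update γ' n j i)
      = η n j * ∏ i ∈ ({n}ᶜ : Finset (Fin P)), η i (γ' i) := by
    rw [Fintype.prod_eq_mul_prod_compl n, Function.update_self]
    congr 1
    apply Finset.prod_congr rfl
    intro i hi
    rw [Function.update_of_ne (by simpa using hi)]
  by_cases hpos : PosOneOne (Function.update γ' n j)
  · rw [muW, if_pos ⟨hpos, hu⟩, hprod]
    have hoff : OffD γ' n := by
      intro i i' hne hin hi'n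
      have := hpos i i' hne
      rwa [Function.update_of_ne hin, Function.update_of_ne hi'n] at this
    rw [if_pos hoff]
    have hfac : ∏ i ∈ ({n}ᶜ : Finset (Fin P)), (1 - ind1M M j * kdelta j (γ' i)) = 1 := by
      apply Finset.prod_eq_one
      intro i hi
      have hin : i ≠ n := by simpa using hi
      apply factor_eq_one
      rintro ⟨he, h1, h2⟩
      exact hpos n i (Ne.symm hin)
        ⟨by rw [Function.update_self, Function.update_of_ne hin, he],
         by rw [Function.update_self]; omega⟩
    rw [wcond, hfac, mul_one]
    ring
  · rw [muW, if_neg (fun h => hpos h.1)]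
    unfold PosOneOne at hpos
    push_neg at hpos
    obtain ⟨i, i', hne, he, hp⟩ := hpos
    by_cases hin : i = n
    · subst hin
      rw [Function.update_self] at he hp
      rw [Function.update_of_ne (Ne.symm hne)] at he
      have h1 : 1 ≤ j := hp
      have h2 : j ≤ (M : ℤ) := (Finset.mem_Icc.1 hjm).2
      have : wcond M η γ' i j = 0 := by
        rw [wcond, Finset.prod_eq_zero (i := i') (by simpa using Ne.symm hne)
          (factor_eq_zero M ⟨he, h1, h2⟩), mul_zero]
      rw [this, mul_zero]
    · by_cases hi'n : i' = n
      · subst hi'n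
        rw [Function.update_of_ne hin] at he hp
        rw [Function.update_self] at he
        have h1 : 1 ≤ j := by omega
        have h2 : j ≤ (M : ℤ) := (Finset.mem_Icc.1 hjm).2
        have : wcond M η γ' i' j = 0 := by
          rw [wcond, Finset.prod_eq_zero (i := i) (by simpa using hin)
            (factor_eq_zero M ⟨he.symm, h1, h2⟩), mul_zero]
        rw [this, mul_zero]
      · rw [Function.update_of_ne hin] at he hp
        rw [Function.update_of_ne hi'n] at he
        have : ¬ OffD γ' n := by
          intro hoff
          exact hoff i i' hne hin hi'n ⟨he, hp⟩
        rw [if_neg this, zero_mul]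

lemma Kk_stat (hη : ∀ i : Fin P, ∀ j ∈ Finset.Icc (-1 : ℤ) (M : ℤ), 0 < η i j)
    (n : Fin P) {γ' : Fin P → ℤ} (hγ' : γ' ∈ HF P M) :
    ∑ ζ ∈ HF P M, Kk M η n γ' ζ * muW M η ζ = muW M η γ' := by
  have h1 : ∀ ζ ∈ HF P M, Kk M η n γ' ζ * muW M η ζ
      = (if ∀ i, i ≠ n → γ' i = ζ i then (fun w => qc M η w n (γ' n) * muW M η w) ζ else 0) := by
    intro ζ _
    unfold Kk
    split_ifs <;> simp
  rw [Finset.sum_congr rfl h1, sum_agree hγ' n]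
  have h2 : ∀ j ∈ Finset.Icc (-1 : ℤ) (M : ℤ),
      qc M η (Function.update γ' n j) n (γ' n) * muW M η (Function.update γ' n j)
      = qc M η γ' n (γ' n)
        * ((if OffD γ' n then ∏ i ∈ ({n}ᶜ : Finset (Fin P)), η i (γ' i) else 0)
            * wcond M η γ' n j) := by
    intro j hjm
    rw [qc_congr (fun i hi => Function.update_of_ne hi j γ') (γ' n),
      muW_update (fun _ _ _ => trivial) hγ' n hjm]
  rw [Finset.sum_congr rfl h2, ← Finset.mul_sum, ← Finset.mul_sum]
  have hKn : ∑ j ∈ Finset.Icc (-1 : ℤ) (M : ℤ), wcond M η γ' n j = Knorm M η γ' n := rfl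
  rw [hKn]
  have hγn : γ' n ∈ Finset.Icc (-1 : ℤ) (M : ℤ) := mem_HF.1 hγ' n
  have := muW_update (η := η) (fun _ _ _ => trivial) hγ' n hγn
  rw [Function.update_eq_self] at this
  rw [this]
  unfold qc
  field_simp [(Knorm_pos hη γ' n).ne']

end Stat

section GammaLevel
variable {P M : ℕ} {η : Fin P → ℤ → ℝ}
variable (hη : ∀ i : Fin P, ∀ j ∈ Finset.Icc (-1 : ℤ) (M : ℤ), 0 < η i j)
include hη

lemma Gk_rowsum : ∀ k, k ≤ P → ∀ γ ∈ HF P M, ∑ γ' ∈ HF P M, Gk M η k γ' γ = 1 := by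
  intro k
  induction k with
  | zero =>
    intro _ γ hγ
    have : ∀ γ' ∈ HF P M, Gk M η 0 γ' γ = if γ' = γ then 1 else 0 :=
      fun γ' _ => Gk_zero γ' γ
    rw [Finset.sum_congr rfl this, Finset.sum_ite_eq' (HF P M) γ (fun _ => (1:ℝ)), if_pos hγ]
  | succ k ih =>
    intro hk γ hγ
    have hkP : k < P := hk
    have h1 : ∀ γ' ∈ HF P M, Gk M η (k+1) γ' γ
        = ∑ ζ ∈ HF P M, Kk M η ⟨k, hkP⟩ γ' ζ * Gk M η k ζ γ :=
      fun γ' hγ' => Gk_succ k hkP hγ' hγ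
    rw [Finset.sum_congr rfl h1, Finset.sum_comm]
    have h2 : ∀ ζ ∈ HF P M, ∑ γ' ∈ HF P M, Kk M η ⟨k, hkP⟩ γ' ζ * Gk M η k ζ γ
        = Gk M η k ζ γ := by
      intro ζ hζ
      rw [← Finset.sum_mul, Kk_rowsum hη _ hζ, one_mul]
    rw [Finset.sum_congr rfl h2]
    exact ih (le_of_lt hkP) γ hγ

lemma Gk_stat : ∀ k, k ≤ P → ∀ γ' ∈ HF P M,
    ∑ γ ∈ HF P M, Gk M η k γ' γ * muW M η γ = muW M η γ' := by
  intro k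
  induction k with
  | zero =>
    intro _ γ' hγ'
    have : ∀ γ ∈ HF P M, Gk M η 0 γ' γ * muW M η γ
        = if γ = γ' then muW M η γ else 0 := by
      intro γ _
      rw [Gk_zero]
      by_cases h : γ' = γ
      · rw [if_pos h, if_pos h.symm, one_mul]
      · rw [if_neg h, if_neg (Ne.symm h), zero_mul]
    rw [Finset.sum_congr rfl this, Finset.sum_ite_eq' (HF P M) γ' (fun γ => muW M η γ),
      if_pos hγ']
  | succ k ih =>
    intro hk γ' hγ'
    have hkP : k < P := hk
    have h1 : ∀ γ ∈ HF P M, Gk M η (k+1) γ' γ * muW M η γ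
        = ∑ ζ ∈ HF P M, Kk M η ⟨k, hkP⟩ γ' ζ * (Gk M η k ζ γ * muW M η γ) := by
      intro γ hγ
      rw [Gk_succ k hkP hγ' hγ, Finset.sum_mul]
      exact Finset.sum_congr rfl fun ζ _ => mul_assoc _ _ _
    rw [Finset.sum_congr rfl h1, Finset.sum_comm]
    have h2 : ∀ ζ ∈ HF P M, ∑ γ ∈ HF P M, Kk M η ⟨k, hkP⟩ γ' ζ * (Gk M η k ζ γ * muW M η γ)
        = Kk M η ⟨k, hkP⟩ γ' ζ * muW M η ζ := by
      intro ζ hζ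
      rw [← Finset.mul_sum, ih (le_of_lt hkP) ζ hζ]
    rw [Finset.sum_congr rfl h2]
    exact Kk_stat hη _ hγ'

lemma gibbs_rowsum_HF {γ : Fin P → ℤ} (hγ : γ ∈ HF P M) :
    ∑ γ' ∈ HF P M, gibbs M η γ' γ = 1 := by
  have := Gk_rowsum hη P le_rfl γ hγ
  rwa [Finset.sum_congr rfl (fun γ' _ => Gk_top P le_rfl γ' γ)] at this

lemma gibbs_stat_HF {γ' : Fin P → ℤ} (hγ' : γ' ∈ HF P M) :
    ∑ γ ∈ HF P M, gibbs M η γ' γ * muW M η γ = muW M η γ' := by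
  have := Gk_stat hη P le_rfl γ' hγ'
  rwa [Finset.sum_congr rfl (fun γ _ => by rw [Gk_top P le_rfl γ' γ])] at this

omit hη

lemma gibbs_nonneg' (hη : ∀ i : Fin P, ∀ j ∈ Finset.Icc (-1 : ℤ) (M : ℤ), 0 < η i j)
    {γ' : Fin P → ℤ} (hγ' : γ' ∈ HF P M) (γ : Fin P → ℤ) : 0 ≤ gibbs M η γ' γ := by
  unfold gibbs
  apply Finset.prod_nonneg
  intro n _
  exact qc_nonneg hη _ n (mem_HF.1 hγ' n)

lemma gibbs_vanish {γ' : Fin P → ℤ} (hγ' : γ' ∈ HF P M) (hnot : ¬ PosOneOne γ')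
    (γ : Fin P → ℤ) : gibbs M η γ' γ = 0 := by
  unfold PosOneOne at hnot
  push_neg at hnot
  obtain ⟨i, i', hne, he, hp⟩ := hnot
  -- produce a pair b < a with γ' a = γ' b, 0 < γ' a
  obtain ⟨a, b, hba, hab, hpa⟩ :
      ∃ a b : Fin P, b < a ∧ γ' a = γ' b ∧ 0 < γ' a := by
    rcases lt_or_gt_of_ne hne with h | h
    · exact ⟨i', i, h, he.symm, he ▸ hp⟩
    · exact ⟨i, i', h, he, hp⟩
  unfold gibbs
  apply Finset.prod_eq_zero (Finset.mem_univ a)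
  have hw : wcond M η (mix γ' γ a) a (γ' a) = 0 := by
    rw [wcond]
    apply mul_eq_zero_of_right
    apply Finset.prod_eq_zero (i := b) (by simp [Finset.mem_compl]; exact (ne_of_lt hba))
    have hmixb : mix γ' γ a b = γ' b := by unfold mix; rw [if_pos hba]
    rw [hmixb]
    apply factor_eq_zero
    refine ⟨hab, hpa, ?_⟩
    have := (Finset.mem_Icc.1 (mem_HF.1 hγ' a)).2
    exact this
  rw [hw, zero_div]

lemma mem_GammaF {γ : Fin P → ℤ} : γ ∈ GammaF P M ↔ γ ∈ HF P M ∧ PosOneOne γ := by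
  unfold GammaF HF PosOneOne
  simp [Finset.mem_filter]

lemma gibbs_rowsum_Gamma (hη : ∀ i : Fin P, ∀ j ∈ Finset.Icc (-1 : ℤ) (M : ℤ), 0 < η i j)
    {γ : Fin P → ℤ} (hγ : γ ∈ GammaF P M) :
    ∑ γ' ∈ GammaF P M, gibbs M η γ' γ = 1 := by
  have hγH : γ ∈ HF P M := (mem_GammaF.1 hγ).1
  have hsplit := Finset.sum_filter_add_sum_filter_not (HF P M)
    (fun w => PosOneOne w) (fun γ' => gibbs M η γ' γ)
  have hzero : ∑ γ' ∈ (HF P M).filter (fun w => ¬ PosOneOne w), gibbs M η γ' γ = 0 := by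
    apply Finset.sum_eq_zero
    intro γ'' hγ''
    obtain ⟨h1, h2⟩ := Finset.mem_filter.1 hγ''
    exact gibbs_vanish h1 h2 γ
  have hGF : GammaF P M = (HF P M).filter (fun w => PosOneOne w) := by
    ext w; rw [mem_GammaF, Finset.mem_filter]
  rw [hGF]
  have := gibbs_rowsum_HF hη hγH
  rw [← hsplit, hzero, add_zero] at this
  exact this

lemma gibbs_stat_Gamma (hη : ∀ i : Fin P, ∀ j ∈ Finset.Icc (-1 : ℤ) (M : ℤ), 0 < η i j)
    {γ' : Fin P → ℤ} (hγ' : γ' ∈ GammaF P M) :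
    ∑ γ ∈ GammaF P M, gibbs M η γ' γ * (∏ i, η i (γ i)) = ∏ i, η i (γ' i) := by
  have hγ'H : γ' ∈ HF P M := (mem_GammaF.1 hγ').1
  have hstat := gibbs_stat_HF hη hγ'H
  have hGF : GammaF P M = (HF P M).filter (fun w => PosOneOne w) := by
    ext w; rw [mem_GammaF, Finset.mem_filter]
  have hsplit := Finset.sum_filter_add_sum_filter_not (HF P M)
    (fun w => PosOneOne w) (fun γ => gibbs M η γ' γ * muW M η γ)
  have hzero : ∑ γ ∈ (HF P M).filter (fun w => ¬ PosOneOne w),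
      gibbs M η γ' γ * muW M η γ = 0 := by
    apply Finset.sum_eq_zero
    intro γ hγ
    obtain ⟨h1, h2⟩ := Finset.mem_filter.1 hγ
    rw [muW, if_neg (fun hc => h2 hc.1), mul_zero]
  rw [← hsplit, hzero, add_zero] at hstat
  have hper : ∀ γ ∈ (HF P M).filter (fun w => PosOneOne w),
      gibbs M η γ' γ * muW M η γ = gibbs M η γ' γ * (∏ i, η i (γ i)) := by
    intro γ hγ
    obtain ⟨h1, h2⟩ := Finset.mem_filter.1 hγ
    rw [muW, if_pos ⟨h2, h1⟩]
  rw [Finset.sum_congr rfl hper] at hstat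
  rw [hGF]
  rw [hstat, muW, if_pos ⟨(mem_GammaF.1 hγ').2, hγ'H⟩]

end GammaLevel

section Chain
variable {P M : ℕ} {η : Fin P → ℤ → ℝ}
variable (hη : ∀ i : Fin P, ∀ j ∈ Finset.Icc (-1 : ℤ) (M : ℤ), 0 < η i j)

lemma neg1_mem_Gamma : (fun _ : Fin P => (-1 : ℤ)) ∈ GammaF P M := by
  rw [mem_GammaF]
  constructor
  · rw [mem_HF]; intro i; exact neg_one_mem_Icc
  · intro i i' _ h; exact absurd h.2 (by norm_num)

lemma zero_mem_Gamma : (fun _ : Fin P => (0 : ℤ)) ∈ GammaF P M := by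
  rw [mem_GammaF]
  constructor
  · rw [mem_HF]; intro i; simp [Finset.mem_Icc]
  · intro i i' _ h; exact absurd h.2 (by norm_num)

lemma Gamma_nonempty : (GammaF P M).Nonempty := ⟨_, neg1_mem_Gamma⟩

lemma two_le_card_Gamma (hP : 0 < P) : 2 ≤ (GammaF P M).card := by
  have h1 : (fun _ : Fin P => (-1 : ℤ)) ≠ (fun _ : Fin P => (0 : ℤ)) := by
    intro h
    have := congrFun h ⟨0, hP⟩
    norm_num at this
  calc 2 = ({(fun _ : Fin P => (-1 : ℤ)), (fun _ : Fin P => (0 : ℤ))} :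
        Finset (Fin P → ℤ)).card := by rw [Finset.card_insert_of_notMem (by simpa using h1)]; simp
    _ ≤ (GammaF P M).card := by
        apply Finset.card_le_card
        intro x hx
        simp only [Finset.mem_insert, Finset.mem_singleton] at hx
        rcases hx with rfl | rfl
        · exact neg1_mem_Gamma
        · exact zero_mem_Gamma

include hη

lemma gibbs_to_neg1_pos (γ : Fin P → ℤ) :
    0 < gibbs M η (fun _ => (-1 : ℤ)) γ := by
  unfold gibbs
  apply Finset.prod_pos
  intro n _
  rw [wcond_neg_one]
  exact div_pos (hη n (-1) neg_one_mem_Icc) (Knorm_pos hη _ n)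

lemma gibbs_from_neg1_pos {γ' : Fin P → ℤ} (hγ' : γ' ∈ GammaF P M) :
    0 < gibbs M η γ' (fun _ => (-1 : ℤ)) := by
  obtain ⟨hH, hpo⟩ := mem_GammaF.1 hγ'
  unfold gibbs
  apply Finset.prod_pos
  intro n _
  apply div_pos _ (Knorm_pos hη _ n)
  rw [wcond]
  have hfac : ∏ i ∈ ({n}ᶜ : Finset (Fin P)),
      (1 - ind1M M (γ' n) * kdelta (γ' n) (mix γ' (fun _ => (-1:ℤ)) n i)) = 1 := by
    apply Finset.prod_eq_one
    intro i hi
    have hin : i ≠ n := by simpa using hi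
    apply factor_eq_one
    rintro ⟨he, h1, h2⟩
    unfold mix at he
    split_ifs at he with hlt
    · exact hpo n i (Ne.symm hin) ⟨he, by omega⟩
    · rw [show ((fun _ : Fin P => (-1:ℤ)) i) = -1 from rfl] at he; omega
  rw [hfac, mul_one]
  exact hη n (γ' n) (mem_HF.1 hH n)

lemma twoStep_pos {γ γ' : Fin P → ℤ} (hγ : γ ∈ GammaF P M) (hγ' : γ' ∈ GammaF P M) :
    0 < twoStep P M η γ' γ := by
  unfold twoStep
  have hterm : 0 < gibbs M η γ' (fun _ => (-1:ℤ)) * gibbs M η (fun _ => (-1:ℤ)) γ :=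
    mul_pos (gibbs_from_neg1_pos hη hγ') (gibbs_to_neg1_pos hη γ)
  calc (0:ℝ) < gibbs M η γ' (fun _ => (-1:ℤ)) * gibbs M η (fun _ => (-1:ℤ)) γ := hterm
    _ ≤ ∑ ζ ∈ GammaF P M, gibbs M η γ' ζ * gibbs M η ζ γ := by
        apply Finset.single_le_sum
          (f := fun ζ => gibbs M η γ' ζ * gibbs M η ζ γ) _ neg1_mem_Gamma
        intro ζ hζ
        exact mul_nonneg (gibbs_nonneg' hη (mem_GammaF.1 hγ').1 ζ)
          (gibbs_nonneg' hη (mem_GammaF.1 hζ).1 γ)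

lemma twoStep_rowsum {γ : Fin P → ℤ} (hγ : γ ∈ GammaF P M) :
    ∑ ζ ∈ GammaF P M, twoStep P M η ζ γ = 1 := by
  unfold twoStep
  rw [Finset.sum_comm]
  have h1 : ∀ ξ ∈ GammaF P M, ∑ ζ ∈ GammaF P M, gibbs M η ζ ξ * gibbs M η ξ γ
      = gibbs M η ξ γ := by
    intro ξ hξ
    rw [← Finset.sum_mul, gibbs_rowsum_Gamma hη hξ, one_mul]
  rw [Finset.sum_congr rfl h1]
  exact gibbs_rowsum_Gamma hη hγ

lemma kernelPow_nonneg : ∀ j, ∀ γ' ∈ GammaF P M, ∀ γ, 0 ≤ kernelPow P M η j γ' γ := by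
  intro j
  induction j with
  | zero => intro γ' _ γ; rw [kernelPow]; positivity
  | succ j ih =>
    intro γ' hγ' γ
    rw [kernelPow]
    apply Finset.sum_nonneg
    intro ζ hζ
    exact mul_nonneg (gibbs_nonneg' hη (mem_GammaF.1 hγ').1 ζ) (ih ζ hζ γ)

lemma kernelPow_rowsum : ∀ j, ∀ γ ∈ GammaF P M,
    ∑ γ' ∈ GammaF P M, kernelPow P M η j γ' γ = 1 := by
  intro j
  induction j with
  | zero =>
    intro γ hγ
    have : ∀ γ' ∈ GammaF P M, kernelPow P M η 0 γ' γ = if γ' = γ then 1 else 0 :=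
      fun γ' _ => by rw [kernelPow]
    rw [Finset.sum_congr rfl this, Finset.sum_ite_eq' (GammaF P M) γ (fun _ => (1:ℝ)),
      if_pos hγ]
  | succ j ih =>
    intro γ hγ
    have h0 : ∀ γ' ∈ GammaF P M, kernelPow P M η (j+1) γ' γ
        = ∑ ζ ∈ GammaF P M, gibbs M η γ' ζ * kernelPow P M η j ζ γ :=
      fun γ' _ => by rw [kernelPow]
    rw [Finset.sum_congr rfl h0, Finset.sum_comm]
    have h1 : ∀ ζ ∈ GammaF P M, ∑ γ' ∈ GammaF P M, gibbs M η γ' ζ * kernelPow P M η j ζ γ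
        = kernelPow P M η j ζ γ := by
      intro ζ hζ
      rw [← Finset.sum_mul, gibbs_rowsum_Gamma hη hζ, one_mul]
    rw [Finset.sum_congr rfl h1]
    exact ih γ hγ

lemma kernelPow_le_one (j : ℕ) {γ' γ : Fin P → ℤ}
    (hγ' : γ' ∈ GammaF P M) (hγ : γ ∈ GammaF P M) : kernelPow P M η j γ' γ ≤ 1 := by
  have := kernelPow_rowsum hη j γ hγ
  calc kernelPow P M η j γ' γ
      ≤ ∑ ξ ∈ GammaF P M, kernelPow P M η j ξ γ :=
        Finset.single_le_sum (fun ξ hξ => kernelPow_nonneg hη j ξ hξ γ) hγ'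
    _ = 1 := this

lemma kernelPow_succ_right : ∀ j, ∀ γ' ∈ GammaF P M, ∀ γ ∈ GammaF P M,
    kernelPow P M η (j+1) γ' γ
      = ∑ ζ ∈ GammaF P M, kernelPow P M η j γ' ζ * gibbs M η ζ γ := by
  intro j
  induction j with
  | zero =>
    intro γ' hγ' γ hγ
    rw [kernelPow]
    have h1 : ∀ ζ ∈ GammaF P M, gibbs M η γ' ζ * kernelPow P M η 0 ζ γ
        = if ζ = γ then gibbs M η γ' ζ else 0 := by
      intro ζ _
      rw [kernelPow]
      split_ifs <;> ring
    rw [Finset.sum_congr rfl h1, Finset.sum_ite_eq' (GammaF P M) γ (fun ζ => gibbs M η γ' ζ),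
      if_pos hγ]
    have h2 : ∀ ζ ∈ GammaF P M, kernelPow P M η 0 γ' ζ * gibbs M η ζ γ
        = if ζ = γ' then gibbs M η ζ γ else 0 := by
      intro ζ _
      rw [kernelPow]
      by_cases h : γ' = ζ
      · rw [if_pos h, if_pos h.symm, one_mul]
      · rw [if_neg h, if_neg (Ne.symm h), zero_mul]
    rw [Finset.sum_congr rfl h2, Finset.sum_ite_eq' (GammaF P M) γ' (fun ζ => gibbs M η ζ γ),
      if_pos hγ']
  | succ j ih =>
    intro γ' hγ' γ hγ
    rw [kernelPow]
    have h1 : ∀ ζ ∈ GammaF P M, gibbs M η γ' ζ * kernelPow P M η (j+1) ζ γ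
        = ∑ ξ ∈ GammaF P M, gibbs M η γ' ζ * (kernelPow P M η j ζ ξ * gibbs M η ξ γ) := by
      intro ζ hζ
      rw [ih ζ hζ γ hγ, Finset.mul_sum]
    rw [Finset.sum_congr rfl h1, Finset.sum_comm]
    apply Finset.sum_congr rfl
    intro ξ hξ
    rw [kernelPow, Finset.sum_mul]
    apply Finset.sum_congr rfl
    intro ζ hζ
    ring

lemma kernelPow_two_step : ∀ j, ∀ γ' ∈ GammaF P M, ∀ γ ∈ GammaF P M,
    kernelPow P M η (j+2) γ' γ
      = ∑ ζ ∈ GammaF P M, kernelPow P M η j γ' ζ * twoStep P M η ζ γ := by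
  intro j γ' hγ' γ hγ
  rw [kernelPow_succ_right hη (j+1) γ' hγ' γ hγ]
  have h1 : ∀ ξ ∈ GammaF P M, kernelPow P M η (j+1) γ' ξ * gibbs M η ξ γ
      = ∑ ζ ∈ GammaF P M, kernelPow P M η j γ' ζ * (gibbs M η ζ ξ * gibbs M η ξ γ) := by
    intro ξ hξ
    rw [kernelPow_succ_right hη j γ' hγ' ξ hξ, Finset.sum_mul]
    exact Finset.sum_congr rfl fun ζ _ => by ring
  rw [Finset.sum_congr rfl h1, Finset.sum_comm]
  apply Finset.sum_congr rfl
  intro ζ hζ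
  rw [twoStep, Finset.mul_sum]

end Chain

section Contract
variable {α : Type*} [DecidableEq α]

lemma tv_contract_one_sided {S : Finset α} (A B p : α → ℝ) {β D m : ℝ}
    (hβ0 : 0 ≤ β) (hS2 : 2 ≤ S.card)
    (hA : ∀ ζ ∈ S, β ≤ A ζ) (hB : ∀ ζ ∈ S, β ≤ B ζ)
    (hAs : ∑ ζ ∈ S, A ζ = 1) (hBs : ∑ ζ ∈ S, B ζ = 1)
    (hD : 0 ≤ D) (hm : ∀ ζ ∈ S, m ≤ p ζ) (hmD : ∀ ζ ∈ S, p ζ - m ≤ D) :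
    ∑ ζ ∈ S, p ζ * (A ζ - B ζ) ≤ (1 - 2*β) * D := by
  have h0 : ∑ ζ ∈ S, p ζ * (A ζ - B ζ) = ∑ ζ ∈ S, (A ζ - B ζ) * (p ζ - m) := by
    have he : ∀ ζ ∈ S, (A ζ - B ζ) * (p ζ - m) = p ζ * (A ζ - B ζ) - m * (A ζ - B ζ) := by
      intro ζ _; ring
    rw [Finset.sum_congr rfl he, Finset.sum_sub_distrib, ← Finset.mul_sum,
      Finset.sum_sub_distrib, hAs, hBs]
    ring
  rw [h0]
  have hsplit := Finset.sum_filter_add_sum_filter_not S (fun ζ => B ζ < A ζ)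
    (fun ζ => (A ζ - B ζ) * (p ζ - m))
  rw [← hsplit]
  set S1 := S.filter (fun ζ => B ζ < A ζ) with hS1
  set S2 := S.filter (fun ζ => ¬ B ζ < A ζ) with hS2'
  have hneg : ∑ ζ ∈ S2, (A ζ - B ζ) * (p ζ - m) ≤ 0 := by
    apply Finset.sum_nonpos
    intro ζ hζ
    obtain ⟨hζS, hζlt⟩ := Finset.mem_filter.1 hζ
    apply mul_nonpos_of_nonpos_of_nonneg
    · linarith [not_lt.1 hζlt]
    · linarith [hm ζ hζS]
  have hpos : ∑ ζ ∈ S1, (A ζ - B ζ) * (p ζ - m) ≤ (1 - 2*β) * D := by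
    have hstep1 : ∑ ζ ∈ S1, (A ζ - B ζ) * (p ζ - m) ≤ ∑ ζ ∈ S1, (A ζ - B ζ) * D := by
      apply Finset.sum_le_sum
      intro ζ hζ
      obtain ⟨hζS, hζlt⟩ := Finset.mem_filter.1 hζ
      exact mul_le_mul_of_nonneg_left (hmD ζ hζS) (by linarith)
    have hstep2 : ∑ ζ ∈ S1, (A ζ - B ζ) ≤ 1 - 2*β := by
      have hc : (S1.card : ℝ) + (S2.card : ℝ) = (S.card : ℝ) := by
        rw [hS1, hS2']
        norm_cast
        exact Finset.card_filter_add_card_filter_not _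
      have h1 : ∑ ζ ∈ S1, (A ζ - B ζ) ≤ ∑ ζ ∈ S1, (A ζ - β) := by
        apply Finset.sum_le_sum
        intro ζ hζ
        have := hB ζ (Finset.mem_filter.1 hζ).1
        linarith
      have h2 : ∑ ζ ∈ S1, (A ζ - β) = ∑ ζ ∈ S1, A ζ - (S1.card : ℝ) * β := by
        rw [Finset.sum_sub_distrib, Finset.sum_const, nsmul_eq_mul]
      have h3 : ∑ ζ ∈ S1, A ζ = 1 - ∑ ζ ∈ S2, A ζ := by
        have ht := Finset.sum_filter_add_sum_filter_not S (fun ζ => B ζ < A ζ) A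
        rw [← hS1, ← hS2'] at ht
        linarith [hAs, ht]
      have h4 : (S2.card : ℝ) * β ≤ ∑ ζ ∈ S2, A ζ := by
        have := Finset.card_nsmul_le_sum S2 A β (fun ζ hζ => hA ζ (Finset.mem_filter.1 hζ).1)
        rwa [nsmul_eq_mul] at this
      have h5 : (2 : ℝ) ≤ (S.card : ℝ) := by exact_mod_cast hS2
      have : ∑ ζ ∈ S1, (A ζ - B ζ) ≤ 1 - ((S1.card : ℝ) + (S2.card : ℝ)) * β := by
        rw [hc]
        nlinarith
      rw [hc] at this
      nlinarith
    calc ∑ ζ ∈ S1, (A ζ - B ζ) * (p ζ - m) ≤ ∑ ζ ∈ S1, (A ζ - B ζ) * D := hstep1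
      _ = (∑ ζ ∈ S1, (A ζ - B ζ)) * D := by rw [Finset.sum_mul]
      _ ≤ (1 - 2*β) * D := mul_le_mul_of_nonneg_right hstep2 hD
  linarith

lemma tv_contract {S : Finset α} (A B p : α → ℝ) {β D : ℝ}
    (hβ0 : 0 ≤ β) (hS2 : 2 ≤ S.card)
    (hA : ∀ ζ ∈ S, β ≤ A ζ) (hB : ∀ ζ ∈ S, β ≤ B ζ)
    (hAs : ∑ ζ ∈ S, A ζ = 1) (hBs : ∑ ζ ∈ S, B ζ = 1)
    (hD : 0 ≤ D) (hp : ∀ ζ ∈ S, ∀ ζ' ∈ S, |p ζ - p ζ'| ≤ D) :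
    |∑ ζ ∈ S, p ζ * (A ζ - B ζ)| ≤ (1 - 2*β) * D := by
  have hne : S.Nonempty := Finset.card_pos.1 (by omega)
  obtain ⟨ζm, hζm, hmin⟩ := Finset.exists_min_image S p hne
  have hm : ∀ ζ ∈ S, p ζm ≤ p ζ := hmin
  have hmD : ∀ ζ ∈ S, p ζ - p ζm ≤ D := by
    intro ζ hζ
    calc p ζ - p ζm ≤ |p ζ - p ζm| := le_abs_self _
      _ ≤ D := hp ζ hζ ζm hζm
  rw [abs_le]
  constructor
  · have := tv_contract_one_sided B A p hβ0 hS2 hB hA hBs hAs hD hm hmD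
    have heq : ∑ ζ ∈ S, p ζ * (B ζ - A ζ) = - ∑ ζ ∈ S, p ζ * (A ζ - B ζ) := by
      rw [← Finset.sum_neg_distrib]
      exact Finset.sum_congr rfl fun ζ _ => by ring
    rw [heq] at this
    linarith
  · exact tv_contract_one_sided A B p hβ0 hS2 hA hB hAs hBs hD hm hmD

end Contract

section Target
variable {P M : ℕ} {η : Fin P → ℤ → ℝ}
variable (hη : ∀ i : Fin P, ∀ j ∈ Finset.Icc (-1 : ℤ) (M : ℤ), 0 < η i j)
include hη

lemma weight_pos {γ : Fin P → ℤ} (hγ : γ ∈ GammaF P M) : 0 < ∏ i, η i (γ i) :=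
  Finset.prod_pos fun i _ => hη i (γ i) (mem_HF.1 (mem_GammaF.1 hγ).1 i)

lemma Zsum_pos : 0 < ∑ ζ ∈ GammaF P M, ∏ i, η i (ζ i) :=
  Finset.sum_pos (fun ζ hζ => weight_pos hη hζ) Gamma_nonempty

lemma targetDist_eq {γ : Fin P → ℤ} (hγ : γ ∈ GammaF P M) :
    targetDist P M η γ = (∏ i, η i (γ i)) / ∑ ζ ∈ GammaF P M, ∏ i, η i (ζ i) := by
  rw [targetDist, if_pos hγ]

lemma targetDist_nonneg {γ : Fin P → ℤ} (hγ : γ ∈ GammaF P M) :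
    0 ≤ targetDist P M η γ := by
  rw [targetDist_eq hη hγ]
  exact le_of_lt (div_pos (weight_pos hη hγ) (Zsum_pos hη))

lemma targetDist_sum : ∑ γ ∈ GammaF P M, targetDist P M η γ = 1 := by
  have : ∀ γ ∈ GammaF P M, targetDist P M η γ
      = (∏ i, η i (γ i)) / ∑ ζ ∈ GammaF P M, ∏ i, η i (ζ i) :=
    fun γ hγ => targetDist_eq hη hγ
  rw [Finset.sum_congr rfl this, ← Finset.sum_div]
  exact div_self (Zsum_pos hη).ne'

lemma targetDist_stat {γ' : Fin P → ℤ} (hγ' : γ' ∈ GammaF P M) :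
    ∑ γ ∈ GammaF P M, gibbs M η γ' γ * targetDist P M η γ = targetDist P M η γ' := by
  have h1 : ∀ γ ∈ GammaF P M, gibbs M η γ' γ * targetDist P M η γ
      = gibbs M η γ' γ * (∏ i, η i (γ i)) / ∑ ζ ∈ GammaF P M, ∏ i, η i (ζ i) := by
    intro γ hγ
    rw [targetDist_eq hη hγ, mul_div_assoc]
  rw [Finset.sum_congr rfl h1, ← Finset.sum_div, gibbs_stat_Gamma hη hγ',
    ← targetDist_eq hη hγ']

lemma targetDist_stat_pow : ∀ j, ∀ γ' ∈ GammaF P M,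
    ∑ γ ∈ GammaF P M, kernelPow P M η j γ' γ * targetDist P M η γ = targetDist P M η γ' := by
  intro j
  induction j with
  | zero =>
    intro γ' hγ'
    have h1 : ∀ γ ∈ GammaF P M, kernelPow P M η 0 γ' γ * targetDist P M η γ
        = if γ = γ' then targetDist P M η γ else 0 := by
      intro γ _
      rw [kernelPow]
      by_cases h : γ' = γ
      · rw [if_pos h, if_pos h.symm, one_mul]
      · rw [if_neg h, if_neg (Ne.symm h), zero_mul]
    rw [Finset.sum_congr rfl h1,
      Finset.sum_ite_eq' (GammaF P M) γ' (fun γ => targetDist P M η γ), if_pos hγ']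
  | succ j ih =>
    intro γ' hγ'
    have h1 : ∀ γ ∈ GammaF P M, kernelPow P M η (j+1) γ' γ * targetDist P M η γ
        = ∑ ζ ∈ GammaF P M, gibbs M η γ' ζ * (kernelPow P M η j ζ γ * targetDist P M η γ) := by
      intro γ _
      rw [kernelPow, Finset.sum_mul]
      exact Finset.sum_congr rfl fun ζ _ => by ring
    rw [Finset.sum_congr rfl h1, Finset.sum_comm]
    have h2 : ∀ ζ ∈ GammaF P M,
        ∑ γ ∈ GammaF P M, gibbs M η γ' ζ * (kernelPow P M η j ζ γ * targetDist P M η γ)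
        = gibbs M η γ' ζ * targetDist P M η ζ := by
      intro ζ hζ
      rw [← Finset.mul_sum, ih ζ hζ]
    rw [Finset.sum_congr rfl h2]
    exact targetDist_stat hη hγ'

end Target

section Main
variable {P M : ℕ} {η : Fin P → ℤ → ℝ}
variable (hη : ∀ i : Fin P, ∀ j ∈ Finset.Icc (-1 : ℤ) (M : ℤ), 0 < η i j)
include hη

lemma conv_pair (hP : 0 < P) {β : ℝ} (hβ0 : 0 ≤ β)
    (hβle : ∀ γ ∈ GammaF P M, ∀ γ' ∈ GammaF P M, β ≤ twoStep P M η γ' γ)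
    (h2β : 0 ≤ 1 - 2 * β) :
    ∀ j, ∀ γ' ∈ GammaF P M, ∀ γ₁ ∈ GammaF P M, ∀ γ₂ ∈ GammaF P M,
      |kernelPow P M η j γ' γ₁ - kernelPow P M η j γ' γ₂| ≤ (1 - 2*β) ^ (j / 2) := by
  intro j
  induction j using Nat.strong_induction_on with
  | _ j ih =>
    match j, ih with
    | 0, _ =>
      intro γ' _ γ₁ _ γ₂ _
      rw [kernelPow, kernelPow]
      norm_num
      split_ifs <;> norm_num
    | 1, _ =>
      intro γ' hγ' γ₁ hγ₁ γ₂ hγ₂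
      have h1 := kernelPow_nonneg hη 1 γ' hγ' γ₁
      have h2 := kernelPow_nonneg hη 1 γ' hγ' γ₂
      have h3 := kernelPow_le_one hη 1 hγ' hγ₁
      have h4 := kernelPow_le_one hη 1 hγ' hγ₂
      have : (1:ℕ)/2 = 0 := by norm_num
      rw [this, pow_zero, abs_le]
      constructor <;> linarith
    | (k+2), ih =>
      intro γ' hγ' γ₁ hγ₁ γ₂ hγ₂
      rw [kernelPow_two_step hη k γ' hγ' γ₁ hγ₁, kernelPow_two_step hη k γ' hγ' γ₂ hγ₂,
        ← Finset.sum_sub_distrib]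
      have hterm : ∀ ζ ∈ GammaF P M,
          kernelPow P M η k γ' ζ * twoStep P M η ζ γ₁
            - kernelPow P M η k γ' ζ * twoStep P M η ζ γ₂
          = kernelPow P M η k γ' ζ * (twoStep P M η ζ γ₁ - twoStep P M η ζ γ₂) := by
        intro ζ _; ring
      rw [Finset.sum_congr rfl hterm]
      have hD : (0:ℝ) ≤ (1 - 2*β) ^ (k / 2) := pow_nonneg h2β _
      have hres := tv_contract (S := GammaF P M)
        (fun ζ => twoStep P M η ζ γ₁) (fun ζ => twoStep P M η ζ γ₂)
        (fun ζ => kernelPow P M η k γ' ζ)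
        hβ0 (two_le_card_Gamma hP)
        (fun ζ hζ => hβle γ₁ hγ₁ ζ hζ) (fun ζ hζ => hβle γ₂ hγ₂ ζ hζ)
        (twoStep_rowsum hη hγ₁) (twoStep_rowsum hη hγ₂) hD
        (fun ζ hζ ζ' hζ' => ih k (by omega) γ' hγ' ζ hζ ζ' hζ')
      have hdiv : (k+2)/2 = k/2 + 1 := by omega
      rw [hdiv, pow_succ]
      calc |∑ ζ ∈ GammaF P M, kernelPow P M η k γ' ζ
            * (twoStep P M η ζ γ₁ - twoStep P M η ζ γ₂)|
          ≤ (1 - 2*β) * (1 - 2*β) ^ (k/2) := hres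
        _ = (1 - 2*β) ^ (k/2) * (1 - 2*β) := by ring

end Main


/-- exponential convergence of the Gibbs sampler. If
`β = min_{γ,γ'∈Γ} π²(γ'|γ)` (the least likely two-step transition probability),
then `β > 0` and for all `j` and all `γ, γ' ∈ Γ`,
`|π^j(γ'|γ) − π(γ')| ≤ (1 − 2β)^⌊j/2⌋`. -/
theorem stmt10 (P M : ℕ) (hP : 0 < P) (hM : 0 < M) (η : Fin P → ℤ → ℝ)
    (hη : ∀ i : Fin P, ∀ j ∈ Finset.Icc (-1 : ℤ) (M : ℤ), 0 < η i j)
    (β : ℝ)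
    (hβle : ∀ γ ∈ GammaF P M, ∀ γ' ∈ GammaF P M, β ≤ twoStep P M η γ' γ)
    (hβmem : ∃ γ ∈ GammaF P M, ∃ γ' ∈ GammaF P M, twoStep P M η γ' γ = β) :
    0 < β ∧
    ∀ j : ℕ, ∀ γ ∈ GammaF P M, ∀ γ' ∈ GammaF P M,
      |kernelPow P M η j γ' γ - targetDist P M η γ'| ≤ (1 - 2 * β) ^ (j / 2) := by
  obtain ⟨γ₀, hγ₀, γ₀', hγ₀', hβeq⟩ := hβmem
  have hβpos : 0 < β := hβeq ▸ twoStep_pos hη hγ₀ hγ₀'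
  have h2β : 0 ≤ 1 - 2 * β := by
    have hrs := twoStep_rowsum hη (neg1_mem_Gamma (P := P) (M := M))
    have hcard := two_le_card_Gamma (M := M) hP
    have hle := Finset.card_nsmul_le_sum (GammaF P M)
      (fun ζ => twoStep P M η ζ (fun _ => (-1:ℤ))) β
      (fun ζ hζ => hβle _ neg1_mem_Gamma ζ hζ)
    rw [nsmul_eq_mul, hrs] at hle
    have hcard' : (2:ℝ) ≤ ((GammaF P M).card : ℝ) := by exact_mod_cast hcard
    nlinarith
  refine ⟨hβpos, ?_⟩
  intro j γ hγ γ' hγ'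
  have hstat := targetDist_stat_pow hη j γ' hγ'
  have hsum1 := targetDist_sum (M := M) hη
  have hrep : kernelPow P M η j γ' γ - targetDist P M η γ'
      = ∑ γ₂ ∈ GammaF P M,
          (kernelPow P M η j γ' γ - kernelPow P M η j γ' γ₂) * targetDist P M η γ₂ := by
    have he : ∀ γ₂ ∈ GammaF P M,
        (kernelPow P M η j γ' γ - kernelPow P M η j γ' γ₂) * targetDist P M η γ₂
        = kernelPow P M η j γ' γ * targetDist P M η γ₂
          - kernelPow P M η j γ' γ₂ * targetDist P M η γ₂ := by
      intro γ₂ _; ring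
    rw [Finset.sum_congr rfl he, Finset.sum_sub_distrib, ← Finset.mul_sum, hsum1, mul_one,
      hstat]
  rw [hrep]
  calc |∑ γ₂ ∈ GammaF P M,
        (kernelPow P M η j γ' γ - kernelPow P M η j γ' γ₂) * targetDist P M η γ₂|
      ≤ ∑ γ₂ ∈ GammaF P M,
        |(kernelPow P M η j γ' γ - kernelPow P M η j γ' γ₂) * targetDist P M η γ₂| :=
        Finset.abs_sum_le_sum_abs _ _
    _ ≤ ∑ γ₂ ∈ GammaF P M, (1 - 2 * β) ^ (j / 2) * targetDist P M η γ₂ := by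
        apply Finset.sum_le_sum
        intro γ₂ hγ₂
        rw [abs_mul, abs_of_nonneg (targetDist_nonneg hη hγ₂)]
        exact mul_le_mul_of_nonneg_right
          (conv_pair hη hP hβpos.le hβle h2β j γ' hγ' γ hγ γ₂ hγ₂)
          (targetDist_nonneg hη hγ₂)
    _ = (1 - 2 * β) ^ (j / 2) := by rw [← Finset.mul_sum, hsum1, mul_one]
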